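/- (Pseudo-complexity of the binary-encoding implementation) For every integer m ≥ 1 and every natural number β, there exist nonnegative real numbers w_1,…,w_m such that for all z, z' ∈ {1,…,m}: bit_β(z) − bit_β(z') = Σ_{h=1}^m w_h · ( (z/m)·1[h ≥ z] − (z'/m)·1[h ≥ z'] ), and moreover Σ_{h=1}^m w_h ≤ 2m(m−1) + m. -/

import Mathlib

open Finset

private lemma tele_sum (S : ℕ → ℝ) : ∀ n a : ℕ, a ≤ n + 1 →
    ∑ h ∈ Finset.Icc a n, (S h - S (h+1)) = S a - S (n+1) := by
  intro n
  induction n with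
  | zero => intro a ha; interval_cases a <;> simp
  | succ n ih =>
    intro a ha
    rcases Nat.lt_or_ge a (n+2) with h' | h'
    · rw [Finset.sum_Icc_succ_top (by omega), ih a (by omega)]; ring
    · have : a = n + 2 := by omega
      subst this; simp

/-- **Pseudo-complexity of the binary-encoding implementation.**
For every `m ≥ 1` and bit position `β`, there exist nonnegative weights `w 1, …, w m`
implementing the β-th binary digit column, i.e.
`bit_β(z) − bit_β(z') = Σ_{h=1}^m w_h ((z/m)·1[h ≥ z] − (z'/m)·1[h ≥ z'])`
for all `z, z' ∈ {1,…,m}`, with total weight `Σ_h w_h ≤ 2m(m−1) + m`. -/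
theorem vcg_bit_column_pseudo_complexity (m : ℕ) (hm : 1 ≤ m) (β : ℕ) :
    ∃ w : ℕ → ℝ,
      (∀ h ∈ Finset.Icc 1 m, 0 ≤ w h) ∧
      (∀ z ∈ Finset.Icc 1 m, ∀ z' ∈ Finset.Icc 1 m,
        ((z / 2^β % 2 : ℕ) : ℝ) - ((z' / 2^β % 2 : ℕ) : ℝ) =
          ∑ h ∈ Finset.Icc 1 m, w h *
            ((if z ≤ h then (z : ℝ) / m else 0) - (if z' ≤ h then (z' : ℝ) / m else 0))) ∧
      (∑ h ∈ Finset.Icc 1 m, w h ≤ 2 * (m : ℝ) * ((m : ℝ) - 1) + m) := by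
  set b : ℕ → ℝ := fun z => ((z / 2^β % 2 : ℕ) : ℝ) with hb
  have hb0 : ∀ z, 0 ≤ b z := fun z => Nat.cast_nonneg _
  have hb1 : ∀ z, b z ≤ 1 := by
    intro z
    have h2 : z / 2^β % 2 ≤ 1 := Nat.lt_succ_iff.mp (Nat.mod_lt _ (by norm_num))
    simp only [hb]
    exact_mod_cast h2
  set S : ℕ → ℝ := fun z => if z ≤ m then (m : ℝ) * (b z + m - 1) / z else 0 with hSdef
  have hmR : (1:ℝ) ≤ m := by exact_mod_cast hm
  refine ⟨fun h => S h - S (h+1), ?_, ?_, ?_⟩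
  · -- nonnegativity
    intro h hh
    simp only [Finset.mem_Icc] at hh
    rcases eq_or_lt_of_le hh.2 with heq | hlt
    · subst heq
      have h0 : S (h+1) = 0 := by simp [hSdef]
      show (0:ℝ) ≤ S h - S (h+1)
      rw [h0]
      simp only [hSdef, if_pos le_rfl, sub_zero]
      have hh1 : (0:ℝ) < h := by exact_mod_cast hh.1
      apply div_nonneg _ (le_of_lt hh1)
      nlinarith [hb0 h]
    · have h1 : S h = (m : ℝ) * (b h + m - 1) / h := by simp [hSdef, hh.2]
      have h2 : S (h+1) = (m : ℝ) * (b (h+1) + m - 1) / (h+1) := by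
        simp [hSdef, Nat.succ_le_of_lt hlt]
      show (0:ℝ) ≤ S h - S (h+1)
      rw [h1, h2, sub_nonneg, div_le_div_iff₀ (by positivity) (by exact_mod_cast hh.1)]
      have hhm : (h:ℝ) ≤ (m:ℝ) - 1 := by
        have : h + 1 ≤ m := hlt
        have : (h:ℝ) + 1 ≤ m := by exact_mod_cast this
        linarith
      have hh0 : (0:ℝ) ≤ (h:ℝ) := Nat.cast_nonneg _
      nlinarith [mul_nonneg (hb0 h) (show (0:ℝ) ≤ (h:ℝ)+1 by linarith),
        mul_le_of_le_one_left hh0 (hb1 (h+1)),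
        mul_le_mul_of_nonneg_left hhm (show (0:ℝ) ≤ (m:ℝ) by linarith),
        mul_nonneg (hb0 (h+1)) hh0]
  · -- main identity
    have key : ∀ z ∈ Finset.Icc 1 m,
        ∑ h ∈ Finset.Icc 1 m, (S h - S (h+1)) * (if z ≤ h then (z : ℝ) / m else 0)
          = b z + m - 1 := by
      intro z hz
      simp only [Finset.mem_Icc] at hz
      rw [← Finset.sum_subset (Finset.Icc_subset_Icc_left hz.1 : Finset.Icc z m ⊆ Finset.Icc 1 m)]
      · have : ∀ h ∈ Finset.Icc z m, (S h - S (h+1)) * (if z ≤ h then (z : ℝ) / m else 0)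
            = (S h - S (h+1)) * ((z:ℝ)/m) := by
          intro h hh
          simp only [Finset.mem_Icc] at hh
          rw [if_pos hh.1]
        rw [Finset.sum_congr rfl this, ← Finset.sum_mul, tele_sum S m z (by omega)]
        have hS1 : S z = (m : ℝ) * (b z + m - 1) / z := by simp [hSdef, hz.2]
        have hS2 : S (m+1) = 0 := by simp [hSdef]
        rw [hS1, hS2]
        have hz0 : (z:ℝ) ≠ 0 := Nat.cast_ne_zero.mpr (by omega)
        have hm0 : (m:ℝ) ≠ 0 := Nat.cast_ne_zero.mpr (by omega)
        field_simp
        ring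
      · intro h hh hh'
        simp only [Finset.mem_Icc] at hh hh'
        rw [if_neg (by omega), mul_zero]
    intro z hz z' hz'
    have expand : ∑ h ∈ Finset.Icc 1 m, (S h - S (h+1)) *
        ((if z ≤ h then (z : ℝ) / m else 0) - (if z' ≤ h then (z' : ℝ) / m else 0))
        = (∑ h ∈ Finset.Icc 1 m, (S h - S (h+1)) * (if z ≤ h then (z : ℝ) / m else 0))
          - ∑ h ∈ Finset.Icc 1 m, (S h - S (h+1)) * (if z' ≤ h then (z' : ℝ) / m else 0) := by
      rw [← Finset.sum_sub_distrib]
      exact Finset.sum_congr rfl fun h _ => by ring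
    rw [expand, key z hz, key z' hz']
    show b z - b z' = _
    ring
  · -- sum bound
    rw [tele_sum S m 1 (by omega)]
    have hS1 : S 1 = (m : ℝ) * (b 1 + m - 1) := by simp [hSdef, hm]
    have hS2 : S (m+1) = 0 := by simp [hSdef]
    rw [hS1, hS2]
    nlinarith [hb1 1, hb0 1]
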